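/- arXiv:1109.3929 — 2 statements merged into one kernel-verified Lean document; each statement's English description precedes it below -/
import Mathlib

section
/- If n ≡ 4 (mod 5), then the set D = {x_{i2}, x_{i3}, x_{(i+2)1}, x_{(i+3)1}, x_{(i+2)4}, x_{(i+3)4} : i ≡ 1 (mod 5), 1 ≤ i ≤ n−3} is a minimum total dominating set of G_{n,4}. -/
open SimpleGraph

/-- The grid graph `G_{n,m}`, the Cartesian (box) product of paths `P_n` and `P_m`. -/
def gridGraph (n m : ℕ) : SimpleGraph (Fin n × Fin m) :=
  (pathGraph n) □ (pathGraph m)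

/-- `D` is a total dominating set of `G`: every vertex has a neighbor in `D`. -/
def IsTotalDomSet {V : Type*} (G : SimpleGraph V) (D : Set V) : Prop :=
  ∀ v : V, ∃ u ∈ D, G.Adj v u

/-- The total domination number of `G`. -/
noncomputable def totalDomNum {V : Type*} [Fintype V] (G : SimpleGraph V) : ℕ :=
  sInf {k | ∃ D : Finset V, IsTotalDomSet G ↑D ∧ D.card = k}

/-- The total bondage number: the least number of edges whose removal increases
the total domination number. -/
noncomputable def totalBondage {V : Type*} [Fintype V] (G : SimpleGraph V) : ℕ :=
  sInf {k | ∃ F : Finset (Sym2 V), ↑F ⊆ G.edgeSet ∧ F.card = k ∧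
    totalDomNum (G.deleteEdges ↑F) > totalDomNum G}

/-- The set `{x_{i2}, x_{i3}, x_{(i+2)1}, x_{(i+3)1}, x_{(i+2)4}, x_{(i+3)4} :
i ≡ 1 (mod 5), 1 ≤ i ≤ n-3}`, written in 0-based coordinates. -/
def gridFourPattern (n : ℕ) : Set (Fin n × Fin 4) :=
  {v | ((v.2 = 1 ∨ v.2 = 2) ∧ v.1.val % 5 = 0) ∨
       ((v.2 = 0 ∨ v.2 = 3) ∧ (v.1.val % 5 = 2 ∨ v.1.val % 5 = 3))}

/-! ### Auxiliary machinery -/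

open Finset

/-- Dual weight pattern (an "open packing" certificate), period 10 in the row index. -/
def Ypat (a b : ℕ) : ℕ :=
  if ((a % 10 = 0 ∨ a % 10 = 3) ∧ (b = 2 ∨ b = 3)) ∨
     ((a % 10 = 1 ∨ a % 10 = 2) ∧ b = 0) ∨
     ((a % 10 = 5 ∨ a % 10 = 8) ∧ (b = 0 ∨ b = 1)) ∨
     ((a % 10 = 6 ∨ a % 10 = 7) ∧ b = 3) then 1 else 0

/-- Grid adjacency in `ℕ` coordinates. -/
def adjN (i j a b : ℕ) : Prop :=
  ((i + 1 = a ∨ a + 1 = i) ∧ j = b) ∨ ((j + 1 = b ∨ b + 1 = j) ∧ i = a)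

instance (i j a b : ℕ) : Decidable (adjN i j a b) := by unfold adjN; infer_instance

/-- The pattern in `ℕ` coordinates. -/
def patN (a b : ℕ) : Prop :=
  ((b = 1 ∨ b = 2) ∧ a % 5 = 0) ∨ ((b = 0 ∨ b = 3) ∧ (a % 5 = 2 ∨ a % 5 = 3))

instance (a b : ℕ) : Decidable (patN a b) := by unfold patN; infer_instance

set_option maxHeartbeats 2000000 in
lemma ypat_nbr_le (i j : ℕ) (hj : j < 4) :
    (if 0 < i then Ypat (i - 1) j else 0) + Ypat (i + 1) j +
      (if 0 < j then Ypat i (j - 1) else 0) + Ypat i (j + 1) ≤ 1 := by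
  have e1 : (i + 1) % 10 = (i % 10 + 1) % 10 := by omega
  have h10 : i % 10 < 10 := by omega
  unfold Ypat
  rcases (by omega : i = 0 ∨ 0 < i) with hi|hi
  · subst hi; interval_cases j <;> simp
  · have e2 : (i - 1) % 10 = (i % 10 + 9) % 10 := by omega
    rw [e1, e2, if_pos hi]
    interval_cases j <;> interval_cases h : i % 10 <;> simp

lemma sum_point (f : ℕ → ℕ → ℕ) (n c d : ℕ) :
    (∑ a ∈ range n, ∑ b ∈ range 4, if a = c ∧ b = d then f a b else 0) =
      if c < n ∧ d < 4 then f c d else 0 := by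
  have hc : ∀ a b : ℕ, ((a = c ∧ b = d) : Prop) ↔ (b = d ∧ a = c) := fun _ _ => and_comm
  simp only [hc, ite_and, Finset.sum_ite_eq', Finset.mem_range, Finset.sum_ite_irrel,
    Finset.sum_const_zero]
  split_ifs <;> tauto

lemma adj_sum_le (n i j : ℕ) (hi : i < n) (hj : j < 4) :
    (∑ a ∈ range n, ∑ b ∈ range 4, if adjN i j a b then Ypat a b else 0) ≤ 1 := by
  have key : ∀ a b : ℕ, (if adjN i j a b then Ypat a b else 0) ≤
      (if a = i - 1 ∧ b = j then (if 0 < i then Ypat a b else 0) else 0) +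
      ((if a = i + 1 ∧ b = j then Ypat a b else 0) +
      ((if a = i ∧ b = j - 1 then (if 0 < j then Ypat a b else 0) else 0) +
      (if a = i ∧ b = j + 1 then Ypat a b else 0))) := by
    intro a b
    by_cases h : adjN i j a b
    · rw [if_pos h]; unfold adjN at h; split_ifs <;> omega
    · rw [if_neg h]; exact Nat.zero_le _
  calc (∑ a ∈ range n, ∑ b ∈ range 4, if adjN i j a b then Ypat a b else 0)
      ≤ ∑ a ∈ range n, ∑ b ∈ range 4,
        ((if a = i - 1 ∧ b = j then (if 0 < i then Ypat a b else 0) else 0) +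
        ((if a = i + 1 ∧ b = j then Ypat a b else 0) +
        ((if a = i ∧ b = j - 1 then (if 0 < j then Ypat a b else 0) else 0) +
        (if a = i ∧ b = j + 1 then Ypat a b else 0)))) :=
        Finset.sum_le_sum fun a _ => Finset.sum_le_sum fun b _ => key a b
    _ = (∑ a ∈ range n, ∑ b ∈ range 4, if a = i - 1 ∧ b = j then (if 0 < i then Ypat a b else 0) else 0) +
        ((∑ a ∈ range n, ∑ b ∈ range 4, if a = i + 1 ∧ b = j then Ypat a b else 0) +
        ((∑ a ∈ range n, ∑ b ∈ range 4, if a = i ∧ b = j - 1 then (if 0 < j then Ypat a b else 0) else 0) +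
        (∑ a ∈ range n, ∑ b ∈ range 4, if a = i ∧ b = j + 1 then Ypat a b else 0))) := by
        simp [Finset.sum_add_distrib]
    _ ≤ (if 0 < i then Ypat (i - 1) j else 0) + (Ypat (i + 1) j +
        ((if 0 < j then Ypat i (j - 1) else 0) + Ypat i (j + 1))) := by
        rw [sum_point, sum_point, sum_point, sum_point]
        gcongr <;> split_ifs <;> omega
    _ ≤ 1 := by have := ypat_nbr_le i j hj; omega

lemma ypat_row (a : ℕ) : (∑ b ∈ range 4, Ypat a b) =
    (if a % 10 = 0 ∨ a % 10 = 3 ∨ a % 10 = 5 ∨ a % 10 = 8 then 2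
     else if a % 10 = 4 ∨ a % 10 = 9 then 0 else 1) := by
  have h10 : a % 10 < 10 := by omega
  simp only [Finset.sum_range_succ, Finset.sum_range_zero, Ypat]
  interval_cases h : a % 10 <;> simp

lemma ypat_total (m : ℕ) : (∑ a ∈ range m, ∑ b ∈ range 4, Ypat a b) = 12 * (m / 10) +
    (if m % 10 = 0 then 0 else if m % 10 = 1 then 2 else if m % 10 = 2 then 3
     else if m % 10 = 3 then 4 else if m % 10 = 4 then 6 else if m % 10 = 5 then 6
     else if m % 10 = 6 then 8 else if m % 10 = 7 then 9 else if m % 10 = 8 then 10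
     else 12) := by
  induction m with
  | zero => simp
  | succ k ih =>
    rw [Finset.sum_range_succ, ih, ypat_row k]
    rcases (by omega : k % 10 = 0 ∨ k % 10 = 1 ∨ k % 10 = 2 ∨ k % 10 = 3 ∨ k % 10 = 4 ∨
        k % 10 = 5 ∨ k % 10 = 6 ∨ k % 10 = 7 ∨ k % 10 = 8 ∨ k % 10 = 9) with
      hk|hk|hk|hk|hk|hk|hk|hk|hk|hk <;>
    · have e : (k + 1) % 10 = (k % 10 + 1) % 10 := by omega
      simp only [hk, e] <;> norm_num <;> omega

lemma patn_row (a : ℕ) : (∑ b ∈ range 4, if patN a b then 1 else 0) =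
    (if a % 5 = 0 ∨ a % 5 = 2 ∨ a % 5 = 3 then 2 else 0) := by
  have h5 : a % 5 < 5 := by omega
  simp only [Finset.sum_range_succ, Finset.sum_range_zero, patN]
  interval_cases h : a % 5 <;> simp

lemma patn_total (m : ℕ) : (∑ a ∈ range m, ∑ b ∈ range 4, if patN a b then 1 else 0) =
    6 * (m / 5) + (if m % 5 = 0 then 0 else if m % 5 = 1 then 2 else if m % 5 = 2 then 2
      else if m % 5 = 3 then 4 else 6) := by
  induction m with
  | zero => simp
  | succ k ih =>
    rw [Finset.sum_range_succ, ih, patn_row k]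
    rcases (by omega : k % 5 = 0 ∨ k % 5 = 1 ∨ k % 5 = 2 ∨ k % 5 = 3 ∨ k % 5 = 4) with
      hk|hk|hk|hk|hk <;>
    · have e : (k + 1) % 5 = (k % 5 + 1) % 5 := by omega
      simp only [hk, e] <;> norm_num <;> omega

lemma sum_bridge (n : ℕ) (f : ℕ → ℕ → ℕ) :
    (∑ v : Fin n × Fin 4, f v.1.val v.2.val) = ∑ a ∈ range n, ∑ b ∈ range 4, f a b :=
  calc (∑ v : Fin n × Fin 4, f v.1.val v.2.val)
      = ∑ x : Fin n, ∑ y : Fin 4, f x.val y.val := Fintype.sum_prod_type _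
    _ = ∑ a ∈ range n, ∑ y : Fin 4, f a y.val :=
        Fin.sum_univ_eq_sum_range (fun a => ∑ y : Fin 4, f a y.val) n
    _ = ∑ a ∈ range n, ∑ b ∈ range 4, f a b :=
        Finset.sum_congr rfl fun a _ => Fin.sum_univ_eq_sum_range (fun b => f a b) 4

lemma mem_pattern_iff {n : ℕ} (v : Fin n × Fin 4) :
    v ∈ gridFourPattern n ↔ patN v.1.val v.2.val := by
  simp only [gridFourPattern, Set.mem_setOf_eq, patN, Fin.ext_iff]
  norm_num [show ((0 : Fin 4) : ℕ) = 0 from rfl, show ((1 : Fin 4) : ℕ) = 1 from rfl,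
    show ((2 : Fin 4) : ℕ) = 2 from rfl, show ((3 : Fin 4) : ℕ) = 3 from rfl]

lemma adj_iff {n : ℕ} (v u : Fin n × Fin 4) :
    (gridGraph n 4).Adj v u ↔ adjN v.1.val v.2.val u.1.val u.2.val := by
  simp only [gridGraph, boxProd_adj, pathGraph_adj, adjN, Fin.ext_iff]

instance (n : ℕ) : DecidableRel ((gridGraph n 4).Adj) :=
  fun v u => decidable_of_iff _ (adj_iff v u).symm

lemma exists_nbr (n i j : ℕ) (h : n % 5 = 4) (hi : i < n) (hj : j < 4) :
    ∃ a b, a < n ∧ b < 4 ∧ patN a b ∧ adjN i j a b := by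
  unfold patN adjN
  rcases (by omega : i % 5 = 0 ∨ i % 5 = 1 ∨ i % 5 = 2 ∨ i % 5 = 3 ∨ i % 5 = 4) with
    h5|h5|h5|h5|h5 <;> interval_cases j
  · exact ⟨i, 1, by omega, by omega, by omega, by omega⟩
  · exact ⟨i, 2, by omega, by omega, by omega, by omega⟩
  · exact ⟨i, 1, by omega, by omega, by omega, by omega⟩
  · exact ⟨i, 2, by omega, by omega, by omega, by omega⟩
  · exact ⟨i + 1, 0, by omega, by omega, by omega, by omega⟩
  · exact ⟨i - 1, 1, by omega, by omega, by omega, by omega⟩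
  · exact ⟨i - 1, 2, by omega, by omega, by omega, by omega⟩
  · exact ⟨i + 1, 3, by omega, by omega, by omega, by omega⟩
  · exact ⟨i + 1, 0, by omega, by omega, by omega, by omega⟩
  · exact ⟨i, 0, by omega, by omega, by omega, by omega⟩
  · exact ⟨i, 3, by omega, by omega, by omega, by omega⟩
  · exact ⟨i + 1, 3, by omega, by omega, by omega, by omega⟩
  · exact ⟨i - 1, 0, by omega, by omega, by omega, by omega⟩
  · exact ⟨i, 0, by omega, by omega, by omega, by omega⟩
  · exact ⟨i, 3, by omega, by omega, by omega, by omega⟩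
  · exact ⟨i - 1, 3, by omega, by omega, by omega, by omega⟩
  · exact ⟨i - 1, 0, by omega, by omega, by omega, by omega⟩
  · exact ⟨i + 1, 1, by omega, by omega, by omega, by omega⟩
  · exact ⟨i + 1, 2, by omega, by omega, by omega, by omega⟩
  · exact ⟨i - 1, 3, by omega, by omega, by omega, by omega⟩

lemma pattern_tds (n : ℕ) (h : n % 5 = 4) :
    IsTotalDomSet (gridGraph n 4) (gridFourPattern n) := by
  intro v
  obtain ⟨a, b, ha, hb, hpat, hadj⟩ := exists_nbr n v.1.val v.2.val h v.1.isLt v.2.isLt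
  refine ⟨(⟨a, ha⟩, ⟨b, hb⟩), ?_, ?_⟩
  · rw [mem_pattern_iff]; exact hpat
  · rw [adj_iff]; exact hadj

lemma lower_bound (n : ℕ) (h : n % 5 = 4) (D : Finset (Fin n × Fin 4))
    (hD : IsTotalDomSet (gridGraph n 4) ↑D) : 6 * (n / 5) + 6 ≤ D.card := by
  have hsum : (∑ v : Fin n × Fin 4, Ypat v.1.val v.2.val) = 6 * (n / 5) + 6 := by
    rw [sum_bridge, ypat_total]
    rcases (by omega : n % 10 = 4 ∨ n % 10 = 9) with h10|h10 <;> simp only [h10] <;>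
      norm_num <;> omega
  have step1 : (∑ v : Fin n × Fin 4, Ypat v.1.val v.2.val) ≤
      ∑ v : Fin n × Fin 4, ∑ u ∈ D, (if (gridGraph n 4).Adj u v then Ypat v.1.val v.2.val else 0) := by
    apply Finset.sum_le_sum
    intro v _
    obtain ⟨u0, hu0, hadj⟩ := hD v
    calc Ypat v.1.val v.2.val
        = (if (gridGraph n 4).Adj u0 v then Ypat v.1.val v.2.val else 0) := by
          rw [if_pos hadj.symm]
      _ ≤ ∑ u ∈ D, (if (gridGraph n 4).Adj u v then Ypat v.1.val v.2.val else 0) :=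
          Finset.single_le_sum (f := fun u => if (gridGraph n 4).Adj u v then Ypat v.1.val v.2.val else 0)
            (fun u _ => Nat.zero_le _) hu0
  have step2 : ∀ u : Fin n × Fin 4,
      (∑ v : Fin n × Fin 4, if (gridGraph n 4).Adj u v then Ypat v.1.val v.2.val else 0) ≤ 1 := by
    intro u
    have conv : (∑ v : Fin n × Fin 4, if (gridGraph n 4).Adj u v then Ypat v.1.val v.2.val else 0)
        = ∑ a ∈ range n, ∑ b ∈ range 4, if adjN u.1.val u.2.val a b then Ypat a b else 0 := by
      rw [← sum_bridge n (fun a b => if adjN u.1.val u.2.val a b then Ypat a b else 0)]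
      exact Finset.sum_congr rfl fun v _ => by
        rw [if_congr (adj_iff u v) rfl rfl]
    rw [conv]
    exact adj_sum_le n u.1.val u.2.val u.1.isLt u.2.isLt
  calc 6 * (n / 5) + 6 = ∑ v : Fin n × Fin 4, Ypat v.1.val v.2.val := hsum.symm
    _ ≤ ∑ v : Fin n × Fin 4, ∑ u ∈ D, (if (gridGraph n 4).Adj u v then Ypat v.1.val v.2.val else 0) := step1
    _ = ∑ u ∈ D, ∑ v : Fin n × Fin 4, (if (gridGraph n 4).Adj u v then Ypat v.1.val v.2.val else 0) :=
        Finset.sum_comm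
    _ ≤ ∑ u ∈ D, 1 := Finset.sum_le_sum fun u _ => step2 u
    _ = D.card := by simp

lemma pattern_card (n : ℕ) (h : n % 5 = 4) :
    (gridFourPattern n).ncard = 6 * (n / 5) + 6 := by
  classical
  have : gridFourPattern n = {v : Fin n × Fin 4 | patN v.1.val v.2.val} := by
    ext v; exact mem_pattern_iff v
  rw [this, Set.ncard_eq_toFinset_card', Set.toFinset_setOf, Finset.card_filter]
  have := sum_bridge n (fun a b => if patN a b then 1 else 0)
  rw [this, patn_total]
  rcases (by omega : n % 5 = 4) with h5
  simp only [h5]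
  norm_num

theorem grid_four_pattern_min_tds (n : ℕ) (h : n % 5 = 4) :
    IsTotalDomSet (gridGraph n 4) (gridFourPattern n) ∧
    (gridFourPattern n).ncard = totalDomNum (gridGraph n 4) := by
  classical
  refine ⟨pattern_tds n h, ?_⟩
  have hcard := pattern_card n h
  set S := {k | ∃ D : Finset (Fin n × Fin 4), IsTotalDomSet (gridGraph n 4) ↑D ∧ D.card = k} with hS
  have hmem : (6 * (n / 5) + 6) ∈ S := by
    refine ⟨(gridFourPattern n).toFinset, ?_, ?_⟩
    · rw [Set.coe_toFinset]; exact pattern_tds n h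
    · rw [← Set.ncard_eq_toFinset_card']; exact hcard
  have hle : totalDomNum (gridGraph n 4) ≤ 6 * (n / 5) + 6 := Nat.sInf_le hmem
  have hge : 6 * (n / 5) + 6 ≤ totalDomNum (gridGraph n 4) := by
    obtain ⟨D, hD, hDcard⟩ := Nat.sInf_mem (⟨_, hmem⟩ : S.Nonempty)
    rw [totalDomNum, ← hS, ← hDcard]
    exact lower_bound n h D hD
  rw [hcard]
  omega
end

section
/- If n ≡ 2 (mod 5) and n ≥ 2, then removing the three edges x_{(n−1)1}x_{n1}, x_{(n−1)2}x_{n2}, and x_{n2}x_{n3} from G_{n,4} increases the total domination number; hence b_t(G_{n,4}) ≤ 3. -/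
open SimpleGraph

-- CMIN = -6
def CT : Nat := 3908159226643238733174585188832949285436588141892009650855234965929345997059325714289832676365678176415369896852015897295907292794622400333505952047800509379089256258006670560529130839001756945695116306342224303855623224296664670580139896914369228897555591957334776423629688430664815045262477461059981190012565992683041981377459295145190121340054536672607263288699002040688578075955101413587898344951682964529968243350434193736508909648892361999713510315791319448714682729673915612593547921076997929102383715363865494480583499036180175712255711120745805500524319775248908273881020591724564522662207228576470250650164046137644983599632629203193972651174088557629459342180974607488531445563536165628466838894360826507039470757825869510059266166724002173018918507670150210338093146660284500833067706710715901721701906148319404701178560679726290505001354461294720162817411322051901939571076928950264984610058536581581156251561228694495776395620457196277580228276316987468301599249424709940215519114218463268250080691654289871603385745670805589050683518839270400955299991988380714432840428938796846612973134267511037289915343302028495640244501922580643406709292263907370917923783643596122671264317506316881994428255304625974654891160421750955489557778599997394761727173547822724557402080220181571273884296033540442962169637737352856967421005079526373243053816902203583238906431676912034532335876699361197083100962279671362339572737844824413867970023241722470761096430253132120987886615637064784840200528300659582518879260870837163062094759928283892360559594519864081871369617992592909370148783964414811911173330075569607990396267415091002115384607736497985863521718284370022331518669885657404136834507392168327479886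387243609347541194236019820296100659915037294707149699356131075246821116236871071244526580379326374710982850339634895368972612287008315906920395003612968177358947278823227211367484000675803556455760284394857939807590

def GT : Nat := 71156114928402341720454464564658944975805131759668998574271361839828912166242181527339699567640509414316255501691426391684369842699857952469864347523738758788342043022657333064819348961067327794516018977233105988061398372004264201498001782544719543533139126197218076579791458425888501805801873282748878513509

def DMT : Nat := 18441806600775300384

def PCT : Nat := 4841987667533046032

def bit (m : Fin 16) (j : Fin 4) : Bool := m.val.testBit j.val

def mcard (m : Fin 16) : ℕ := (PCT >>> (4*m.val)) % 16

def dm (m : Fin 16) : Fin 16 := ⟨(DMT >>> (4*m.val)) % 16, Nat.mod_lt _ (by norm_num)⟩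

def or16 (a b : Fin 16) : Fin 16 := ⟨(a.val ||| b.val) % 16, Nat.mod_lt _ (by norm_num)⟩

def and16 (a b : Fin 16) : Fin 16 := ⟨(a.val &&& b.val) % 16, Nat.mod_lt _ (by norm_num)⟩

def compl16 (a : Fin 16) : Fin 16 := ⟨(a.val ^^^ 15) % 16, Nat.mod_lt _ (by norm_num)⟩

def cpot (r : Fin 5) (s : Fin 16 × Fin 16) : ℤ :=
  let e := (CT >>> (5*(r.val*256 + s.1.val*16 + s.2.val))) % 32
  if e = 31 then 1000 else (e : ℤ) - 6

def gcomp (s : Fin 16 × Fin 16) : ℤ :=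
  let e := (GT >>> (4*(s.1.val*16 + s.2.val))) % 16
  if e = 15 then 100 else (e : ℤ)

def nextSt (s : Fin 16 × Fin 16) (S2 : Fin 16) : Fin 16 × Fin 16 :=
  (S2, compl16 (or16 (dm S2) s.1))

def enc (f : Fin 4 → Bool) : Fin 16 :=
  ⟨((if f 0 then 1 else 0) + (if f 1 then 2 else 0) + (if f 2 then 4 else 0) +
    (if f 3 then 8 else 0)) % 16, Nat.mod_lt _ (by norm_num)⟩

set_option maxRecDepth 10000

lemma bit_enc (f : Fin 4 → Bool) (j : Fin 4) : bit (enc f) j = f j := by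
  revert j; revert f; decide

lemma bit_zero (j : Fin 4) : bit 0 j = false := by revert j; decide

lemma cpot_init : cpot 0 (0, 0) ≤ 0 := by decide

lemma trans_check : ∀ (r : Fin 5) (s : Fin 16 × Fin 16) (S2 : Fin 16),
    (∀ j, bit s.2 j = true → bit S2 j = true) →
    cpot (r+1) (nextSt s S2) ≤ cpot r s + 5*(mcard S2 : ℤ) - 6 := by decide

set_option synthInstance.maxSize 2000 in
set_option synthInstance.maxHeartbeats 2000000 in
set_option maxHeartbeats 4000000 in
lemma comp_check1 : ∀ (B : Fin 16), bit B 1 = true → bit B 0 = true →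
    ∀ (A : Fin 16), (bit A 2 || bit B 3) = true → (bit A 3 || bit B 2) = true →
    ∀ (s : Fin 16 × Fin 16),
    (∀ j, bit s.2 j = true → bit A j = true) →
    (∀ j, bit (or16 (or16 (dm A) s.1) (and16 B 12)) j = true) →
    gcomp s ≤ (mcard A : ℤ) + (mcard B : ℤ) := by decide

lemma comp_check2 : ∀ s : Fin 16 × Fin 16, (25:ℤ) ≤ cpot 0 s + 5 * gcomp s := by decide

lemma bit_dm : ∀ (m : Fin 16) (j j' : Fin 4), (j.val + 1 = j'.val ∨ j'.val + 1 = j.val) →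
    bit m j' = true → bit (dm m) j = true := by decide

lemma bit_or_left : ∀ (a b : Fin 16) (j : Fin 4), bit a j = true → bit (or16 a b) j = true := by
  decide

lemma bit_or_right : ∀ (a b : Fin 16) (j : Fin 4), bit b j = true → bit (or16 a b) j = true := by
  decide

lemma bit_and12 : ∀ (b : Fin 16) (j : Fin 4), bit b j = true → (j = 2 ∨ j = 3) →
    bit (and16 b 12) j = true := by decide

lemma bit_compl : ∀ (a : Fin 16) (j : Fin 4), bit (compl16 a) j = true → bit a j = false := by
  decide

lemma mcard_filter : ∀ m : Fin 16,
    (Finset.univ.filter fun j : Fin 4 => bit m j = true).card = mcard m := by decide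

lemma bit_or_elim : ∀ (a b : Fin 16) (j : Fin 4), bit (or16 a b) j = false →
    bit a j = false ∧ bit b j = false := by decide

lemma fin4_cases : ∀ j : Fin 4, j = 0 ∨ j = 1 ∨ j = 2 ∨ j = 3 := by decide

lemma enc_bit : ∀ m : Fin 16, enc (fun j => bit m j) = m := by decide

open SimpleGraph Finset

/-! ### Graph-side development -/

lemma grid_adj_cases {n : ℕ} {v u : Fin n × Fin 4} (h : (gridGraph n 4).Adj v u) :
    (u.1 = v.1 ∧ (v.2.val + 1 = u.2.val ∨ u.2.val + 1 = v.2.val)) ∨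
    (u.2 = v.2 ∧ (v.1.val + 1 = u.1.val ∨ u.1.val + 1 = v.1.val)) := by
  rw [gridGraph, boxProd_adj] at h
  rcases h with ⟨h1, h2⟩ | ⟨h1, h2⟩
  · right
    rw [pathGraph_adj] at h1
    exact ⟨h2.symm, h1⟩
  · left
    rw [pathGraph_adj] at h1
    exact ⟨h2.symm, h1⟩

/-- Column masks of a set `D`. -/
def colS (n : ℕ) (D : Finset (Fin n × Fin 4)) (i : ℕ) : Fin 16 :=
  if h : i < n then enc (fun j => decide ((⟨i, h⟩, j) ∈ D)) else 0

lemma colS_mem {n : ℕ} {D : Finset (Fin n × Fin 4)} {i : ℕ} (h : i < n) (j : Fin 4) :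
    bit (colS n D i) j = true ↔ (⟨i, h⟩, j) ∈ D := by
  rw [colS, dif_pos h, bit_enc, decide_eq_true_eq]

/-- The interface state after the first `i` columns. -/
def stF (n : ℕ) (D : Finset (Fin n × Fin 4)) : ℕ → Fin 16 × Fin 16
  | 0 => (0, 0)
  | i+1 => nextSt (stF n D i) (colS n D i)

def costF (n : ℕ) (D : Finset (Fin n × Fin 4)) (i : ℕ) : ℕ :=
  ∑ t ∈ Finset.range i, mcard (colS n D t)

lemma card_eq_costF (n : ℕ) (D : Finset (Fin n × Fin 4)) : D.card = costF n D n := by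
  have h1 : D.card = ∑ i : Fin n, (D.filter fun v => v.1 = i).card :=
    Finset.card_eq_sum_card_fiberwise (fun x _ => Finset.mem_univ _)
  have h2 : ∀ i : Fin n, (D.filter fun v => v.1 = i).card = mcard (colS n D i.val) := by
    intro i
    rw [← mcard_filter]
    refine Finset.card_bij' (fun v _ => v.2) (fun j _ => (i, j)) ?hi ?hj ?li ?ri
    case hi =>
      intro v hv
      simp only [Finset.mem_filter] at hv ⊢
      refine ⟨Finset.mem_univ _, ?_⟩
      rw [colS_mem i.isLt]
      have hieq : (⟨i.val, i.isLt⟩ : Fin n) = i := rfl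
      rw [hieq, ← hv.2]
      exact hv.1
    case hj =>
      intro j hj
      simp only [Finset.mem_filter, Finset.mem_univ, true_and] at hj
      have := (colS_mem (D := D) i.isLt j).mp hj
      have hi : (⟨i.val, i.isLt⟩ : Fin n) = i := rfl
      rw [hi] at this
      simp only [Finset.mem_filter]
      exact ⟨this, by simp⟩
    case li =>
      intro v hv
      simp only [Finset.mem_filter] at hv
      exact Prod.ext hv.2.symm rfl
    case ri =>
      intro j _
      rfl
  rw [h1]
  exact (Finset.sum_congr rfl fun i _ => h2 i).trans
    (Fin.sum_univ_eq_sum_range (fun t => mcard (colS n D t)) n)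

def res (i : ℕ) : Fin 5 := ⟨i % 5, Nat.mod_lt _ (by norm_num)⟩

lemma res_succ (i : ℕ) : res (i + 1) = res i + 1 := by
  apply Fin.ext
  simp only [res, Fin.add_def, Fin.val_one]
  omega

lemma res_zero : res 0 = 0 := rfl

/-- The three deleted edges. -/
def delE (n : ℕ) (hn : 2 ≤ n) : Set (Sym2 (Fin n × Fin 4)) :=
  {s(((⟨n - 2, by omega⟩ : Fin n), (0 : Fin 4)), ((⟨n - 1, by omega⟩ : Fin n), (0 : Fin 4))),
   s(((⟨n - 2, by omega⟩ : Fin n), (1 : Fin 4)), ((⟨n - 1, by omega⟩ : Fin n), (1 : Fin 4))),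
   s(((⟨n - 1, by omega⟩ : Fin n), (1 : Fin 4)), ((⟨n - 1, by omega⟩ : Fin n), (2 : Fin 4)))}

section LowerBound

variable {n : ℕ} (hn : 2 ≤ n) (D : Finset (Fin n × Fin 4))
variable (hD : IsTotalDomSet ((gridGraph n 4).deleteEdges (delE n hn)) ↑D)

include hn hD

lemma valid_step : ∀ i, i ≤ n - 2 → ∀ j, bit (stF n D i).2 j = true →
    bit (colS n D i) j = true := by
  intro i hi j hbit
  cases i with
  | zero => simp [stF, bit_zero] at hbit
  | succ i' =>
    have hcd : bit (or16 (dm (colS n D i')) (stF n D i').1) j = false := bit_compl _ _ hbit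
    obtain ⟨h1, h2⟩ := bit_or_elim _ _ _ hcd
    have hi' : i' < n := by omega
    obtain ⟨u, huD, hadj⟩ := hD (⟨i', hi'⟩, j)
    rw [Finset.mem_coe] at huD
    rw [SimpleGraph.deleteEdges_adj] at hadj
    have hfst : ((⟨i', hi'⟩ : Fin n), j).1.val = i' := rfl
    rcases grid_adj_cases hadj.1 with ⟨hcol, hrow⟩ | ⟨hrow, hcol⟩
    · exfalso
      have hb : bit (colS n D i') u.2 = true := by
        rw [colS_mem hi']
        have hu : u = (⟨i', hi'⟩, u.2) := Prod.ext hcol rfl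
        rwa [← hu]
      have := bit_dm (colS n D i') j u.2 hrow hb
      rw [h1] at this
      exact Bool.false_ne_true this
    · rcases hcol with hR | hL
      · -- u is in column i'+1
        have hu : u = (⟨i' + 1, by omega⟩, j) := Prod.ext (Fin.ext (show u.1.val = i' + 1 by omega)) hrow
        rw [colS_mem (show i' + 1 < n by omega)]
        rwa [hu] at huD
      · -- u is in column i'-1, contradiction with h2
        exfalso
        obtain ⟨m, rfl⟩ : ∃ m, i' = m + 1 := ⟨u.1.val, by omega⟩
        have hm : m < n := by omega
        have hb : bit (colS n D m) j = true := by
          rw [colS_mem hm]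
          have hu : u = (⟨m, hm⟩, j) := Prod.ext (Fin.ext (show u.1.val = m by omega)) hrow
          rwa [hu] at huD
        have h2' : bit (colS n D m) j = false := h2
        rw [h2'] at hb
        exact Bool.false_ne_true hb

lemma main_ind : ∀ i, i ≤ n - 2 →
    (6 * i : ℤ) + cpot (res i) (stF n D i) ≤ 5 * (costF n D i : ℤ) := by
  intro i
  induction i with
  | zero =>
    intro _
    have : costF n D 0 = 0 := rfl
    rw [this]
    simpa [res_zero, stF] using cpot_init
  | succ i ih =>
    intro hi
    have h1 := ih (by omega)
    have hv := valid_step hn D hD i (by omega)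
    have ht := trans_check (res i) (stF n D i) (colS n D i) hv
    have hst : stF n D (i + 1) = nextSt (stF n D i) (colS n D i) := rfl
    have hres : res (i + 1) = res i + 1 := res_succ i
    have hcost : costF n D (i + 1) = costF n D i + mcard (colS n D i) :=
      Finset.sum_range_succ _ _
    rw [hst, hres, hcost]
    push_cast
    linarith

end LowerBound

section Completion

variable {n : ℕ} (hn : 2 ≤ n) (D : Finset (Fin n × Fin 4))
variable (hD : IsTotalDomSet ((gridGraph n 4).deleteEdges (delE n hn)) ↑D)

include hn hD

lemma lower_bound_s16 (h5 : n % 5 = 2) : 6 * n + 13 ≤ 5 * D.card := by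
  have hn1 : n - 1 < n := by omega
  have hn2 : n - 2 < n := by omega
  set A := colS n D (n - 2) with hA
  set B := colS n D (n - 1) with hB
  -- row 0 of last column
  have hB1 : bit B 1 = true := by
    obtain ⟨u, huD, hadj⟩ := hD (⟨n - 1, hn1⟩, 0)
    rw [Finset.mem_coe] at huD
    rw [SimpleGraph.deleteEdges_adj] at hadj
    have hfst : ((⟨n - 1, hn1⟩ : Fin n), (0 : Fin 4)).1.val = n - 1 := rfl
    have hsnd : ((⟨n - 1, hn1⟩ : Fin n), (0 : Fin 4)).2.val = 0 := rfl
    rcases grid_adj_cases hadj.1 with ⟨hcol, hrow⟩ | ⟨hrow, hcol⟩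
    · have hu : u = (⟨n - 1, hn1⟩, 1) :=
        Prod.ext hcol (Fin.ext (show u.2.val = 1 by have := u.2.isLt; omega))
      rw [hB, colS_mem hn1]
      rwa [hu] at huD
    · exfalso
      rcases hcol with hR | hL
      · have := u.1.isLt; omega
      · apply hadj.2
        have hu : u = (⟨n - 2, hn2⟩, 0) :=
          Prod.ext (Fin.ext (show u.1.val = n - 2 by omega)) hrow
        rw [hu, Sym2.eq_swap]
        exact Set.mem_insert _ _
  -- row 1 of last column
  have hB0 : bit B 0 = true := by
    obtain ⟨u, huD, hadj⟩ := hD (⟨n - 1, hn1⟩, 1)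
    rw [Finset.mem_coe] at huD
    rw [SimpleGraph.deleteEdges_adj] at hadj
    have hfst : ((⟨n - 1, hn1⟩ : Fin n), (1 : Fin 4)).1.val = n - 1 := rfl
    have hsnd : ((⟨n - 1, hn1⟩ : Fin n), (1 : Fin 4)).2.val = 1 := rfl
    rcases grid_adj_cases hadj.1 with ⟨hcol, hrow⟩ | ⟨hrow, hcol⟩
    · rcases hrow with hr1 | hr2
      · -- u.2 = 2 : deleted edge e3
        exfalso
        apply hadj.2
        have hu : u = (⟨n - 1, hn1⟩, 2) :=
          Prod.ext hcol (Fin.ext (show u.2.val = 2 by omega))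
        rw [hu]
        exact Set.mem_insert_iff.mpr (Or.inr (Set.mem_insert_iff.mpr (Or.inr rfl)))
      · -- u.2 = 0
        have hu : u = (⟨n - 1, hn1⟩, 0) :=
          Prod.ext hcol (Fin.ext (show u.2.val = 0 by omega))
        rw [hB, colS_mem hn1]
        rwa [hu] at huD
    · exfalso
      rcases hcol with hR | hL
      · have := u.1.isLt; omega
      · apply hadj.2
        have hu : u = (⟨n - 2, hn2⟩, 1) :=
          Prod.ext (Fin.ext (show u.1.val = n - 2 by omega)) hrow
        rw [hu, Sym2.eq_swap]
        exact Set.mem_insert_iff.mpr (Or.inr (Set.mem_insert _ _))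
  -- row 2 of last column
  have hOr1 : (bit A 2 || bit B 3) = true := by
    obtain ⟨u, huD, hadj⟩ := hD (⟨n - 1, hn1⟩, 2)
    rw [Finset.mem_coe] at huD
    rw [SimpleGraph.deleteEdges_adj] at hadj
    have hfst : ((⟨n - 1, hn1⟩ : Fin n), (2 : Fin 4)).1.val = n - 1 := rfl
    have hsnd : ((⟨n - 1, hn1⟩ : Fin n), (2 : Fin 4)).2.val = 2 := rfl
    rcases grid_adj_cases hadj.1 with ⟨hcol, hrow⟩ | ⟨hrow, hcol⟩
    · rcases hrow with hr1 | hr2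
      · -- u.2 = 3
        have hu : u = (⟨n - 1, hn1⟩, 3) :=
          Prod.ext hcol (Fin.ext (show u.2.val = 3 by omega))
        have : bit B 3 = true := by
          rw [hB, colS_mem hn1]; rwa [hu] at huD
        simp [this]
      · -- u.2 = 1 : deleted edge e3 (swapped)
        exfalso
        apply hadj.2
        have hu : u = (⟨n - 1, hn1⟩, 1) :=
          Prod.ext hcol (Fin.ext (show u.2.val = 1 by omega))
        rw [hu, Sym2.eq_swap]
        exact Set.mem_insert_iff.mpr (Or.inr (Set.mem_insert_iff.mpr (Or.inr rfl)))
    · rcases hcol with hR | hL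
      · exfalso; have := u.1.isLt; omega
      · have hu : u = (⟨n - 2, hn2⟩, 2) :=
          Prod.ext (Fin.ext (show u.1.val = n - 2 by omega)) hrow
        have : bit A 2 = true := by
          rw [hA, colS_mem hn2]; rwa [hu] at huD
        simp [this]
  -- row 3 of last column
  have hOr2 : (bit A 3 || bit B 2) = true := by
    obtain ⟨u, huD, hadj⟩ := hD (⟨n - 1, hn1⟩, 3)
    rw [Finset.mem_coe] at huD
    rw [SimpleGraph.deleteEdges_adj] at hadj
    have hfst : ((⟨n - 1, hn1⟩ : Fin n), (3 : Fin 4)).1.val = n - 1 := rfl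
    have hsnd : ((⟨n - 1, hn1⟩ : Fin n), (3 : Fin 4)).2.val = 3 := rfl
    rcases grid_adj_cases hadj.1 with ⟨hcol, hrow⟩ | ⟨hrow, hcol⟩
    · rcases hrow with hr1 | hr2
      · exfalso; have := u.2.isLt; omega
      · -- u.2 = 2
        have hu : u = (⟨n - 1, hn1⟩, 2) :=
          Prod.ext hcol (Fin.ext (show u.2.val = 2 by omega))
        have : bit B 2 = true := by
          rw [hB, colS_mem hn1]; rwa [hu] at huD
        simp [this]
    · rcases hcol with hR | hL
      · exfalso; have := u.1.isLt; omega
      · have hu : u = (⟨n - 2, hn2⟩, 3) :=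
          Prod.ext (Fin.ext (show u.1.val = n - 2 by omega)) hrow
        have : bit A 3 = true := by
          rw [hA, colS_mem hn2]; rwa [hu] at huD
        simp [this]
  -- full domination of column n-2
  have hfull : ∀ j, bit (or16 (or16 (dm A) (stF n D (n - 2)).1) (and16 B 12)) j = true := by
    intro j
    obtain ⟨u, huD, hadj⟩ := hD (⟨n - 2, hn2⟩, j)
    rw [Finset.mem_coe] at huD
    rw [SimpleGraph.deleteEdges_adj] at hadj
    have hfst : ((⟨n - 2, hn2⟩ : Fin n), j).1.val = n - 2 := rfl
    rcases grid_adj_cases hadj.1 with ⟨hcol, hrow⟩ | ⟨hrow, hcol⟩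
    · -- same column : dm A
      have hb : bit A u.2 = true := by
        rw [hA, colS_mem hn2]
        have hu : u = (⟨n - 2, hn2⟩, u.2) := Prod.ext hcol rfl
        rwa [← hu]
      exact bit_or_left _ _ _ (bit_or_left _ _ _ (bit_dm A j u.2 hrow hb))
    · rcases hcol with hR | hL
      · -- u in column n-1
        have hu : u = (⟨n - 1, hn1⟩, j) :=
          Prod.ext (Fin.ext (show u.1.val = n - 1 by omega)) hrow
        have hbB : bit B j = true := by
          rw [hB, colS_mem hn1]; rwa [hu] at huD
        rcases fin4_cases j with rfl | rfl | rfl | rfl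
        · exfalso
          apply hadj.2
          rw [hu]
          exact Set.mem_insert _ _
        · exfalso
          apply hadj.2
          rw [hu]
          exact Set.mem_insert_iff.mpr (Or.inr (Set.mem_insert _ _))
        · exact bit_or_right _ _ _ (bit_and12 B 2 hbB (Or.inl rfl))
        · exact bit_or_right _ _ _ (bit_and12 B 3 hbB (Or.inr rfl))
      · -- u in column n-3
        obtain ⟨m, hm⟩ : ∃ m, n - 2 = m + 1 := ⟨u.1.val, by omega⟩
        have hmn : m < n := by omega
        have hb : bit (colS n D m) j = true := by
          rw [colS_mem hmn]
          have hu : u = (⟨m, hmn⟩, j) :=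
            Prod.ext (Fin.ext (show u.1.val = m by omega)) hrow
          rwa [hu] at huD
        have hst : (stF n D (n - 2)).1 = colS n D m := by rw [hm]; rfl
        rw [hst]
        exact bit_or_left _ _ _ (bit_or_right _ _ _ hb)
  -- assemble
  have hsub := valid_step hn D hD (n - 2) le_rfl
  have hg := comp_check1 B hB1 hB0 A hOr1 hOr2 (stF n D (n - 2)) hsub hfull
  have h25 := comp_check2 (stF n D (n - 2))
  have hm := main_ind hn D hD (n - 2) le_rfl
  have hres0 : res (n - 2) = 0 := by
    apply Fin.ext
    show (n - 2) % 5 = 0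
    omega
  rw [hres0] at hm
  have hcard : D.card = costF n D (n - 2) + mcard A + mcard B := by
    rw [card_eq_costF]
    have h' : n = n - 2 + 1 + 1 := by omega
    have h'' : n - 2 + 1 = n - 1 := by omega
    calc costF n D n = costF n D (n - 2 + 1 + 1) := by rw [← h']
    _ = costF n D (n - 2 + 1) + mcard (colS n D (n - 2 + 1)) := Finset.sum_range_succ _ _
    _ = costF n D (n - 2) + mcard (colS n D (n - 2)) + mcard (colS n D (n - 2 + 1)) := by
        rw [show costF n D (n - 2 + 1) = costF n D (n - 2) + mcard (colS n D (n - 2)) from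
          Finset.sum_range_succ _ _]
    _ = costF n D (n - 2) + mcard A + mcard B := by rw [h'', ← hA, ← hB]
  have hczt : ((n - 2 : ℕ) : ℤ) = (n : ℤ) - 2 := by omega
  zify
  push_cast [hcard]
  linarith [hm, hg, h25, hczt]

end Completion

/-! ### Upper bound construction -/

def q5 (r : ℕ) : Fin 16 :=
  match r with
  | 0 => 6
  | 2 => 9
  | 3 => 9
  | _ => 0

def pmask (i : ℕ) : Fin 16 := if i = 1 then 15 else if i < 3 then 0 else q5 ((i + 2) % 5)

def upD (n : ℕ) : Finset (Fin n × Fin 4) :=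
  Finset.univ.filter fun v => bit (pmask v.1.val) v.2 = true

lemma pmask_eval (i : ℕ) (h3 : 3 ≤ i) : pmask i = q5 ((i + 2) % 5) := by
  unfold pmask
  rw [if_neg (by omega), if_neg (by omega)]

lemma adj_horiz {n : ℕ} {a b : ℕ} (ha : a < n) (hb : b < n) (hab : a + 1 = b ∨ b + 1 = a)
    (j : Fin 4) : (gridGraph n 4).Adj (⟨a, ha⟩, j) (⟨b, hb⟩, j) := by
  rw [gridGraph, SimpleGraph.boxProd_adj]
  exact Or.inl ⟨SimpleGraph.pathGraph_adj.mpr hab, rfl⟩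

lemma adj_vert {n : ℕ} {a : ℕ} (ha : a < n) {j j' : Fin 4}
    (hjj : j.val + 1 = j'.val ∨ j'.val + 1 = j.val) :
    (gridGraph n 4).Adj (⟨a, ha⟩, j) (⟨a, ha⟩, j') := by
  rw [gridGraph, SimpleGraph.boxProd_adj]
  exact Or.inr ⟨SimpleGraph.pathGraph_adj.mpr hjj, rfl⟩

lemma exists_dom {n : ℕ} (v : Fin n × Fin 4) (i' : ℕ) (h' : i' < n) (j' : Fin 4)
    (hb : bit (pmask i') j' = true) (hadj : (gridGraph n 4).Adj v (⟨i', h'⟩, j')) :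
    ∃ u ∈ ↑(upD n), (gridGraph n 4).Adj v u :=
  ⟨(⟨i', h'⟩, j'), Finset.mem_coe.mpr (Finset.mem_filter.mpr ⟨Finset.mem_univ _, hb⟩), hadj⟩

lemma bit15 : ∀ j : Fin 4, bit 15 j = true := by decide

lemma upD_tds (n : ℕ) (hn : 2 ≤ n) (h5 : n % 5 = 2) :
    IsTotalDomSet (gridGraph n 4) ↑(upD n) := by
  rintro ⟨⟨i, hi⟩, j⟩
  rcases Nat.lt_or_ge i 3 with h3 | h3
  · interval_cases i
    · exact exists_dom _ 1 (by omega) j (by rw [show pmask 1 = 15 from rfl]; exact bit15 j)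
        (adj_horiz _ _ (Or.inl rfl) j)
    · rcases fin4_cases j with rfl | rfl | rfl | rfl
      · exact exists_dom _ 1 (by omega) 1 (bit15 1) (adj_vert _ (Or.inl rfl))
      · exact exists_dom _ 1 (by omega) 0 (bit15 0) (adj_vert _ (Or.inr rfl))
      · exact exists_dom _ 1 (by omega) 3 (bit15 3) (adj_vert _ (Or.inl rfl))
      · exact exists_dom _ 1 (by omega) 2 (bit15 2) (adj_vert _ (Or.inr rfl))
    · exact exists_dom _ 1 (by omega) j (by rw [show pmask 1 = 15 from rfl]; exact bit15 j)
        (adj_horiz _ _ (Or.inr rfl) j)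
  · have hr5 : (i + 2) % 5 = 0 ∨ (i + 2) % 5 = 1 ∨ (i + 2) % 5 = 2 ∨ (i + 2) % 5 = 3 ∨
        (i + 2) % 5 = 4 := by omega
    rcases hr5 with hr | hr | hr | hr | hr
    · -- pmask i = 6 : self-dominating column
      have hb : pmask i = 6 := by rw [pmask_eval i h3, hr]; rfl
      rcases fin4_cases j with rfl | rfl | rfl | rfl
      · exact exists_dom _ i hi 1 (by rw [hb]; decide) (adj_vert _ (Or.inl rfl))
      · exact exists_dom _ i hi 2 (by rw [hb]; decide) (adj_vert _ (Or.inl rfl))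
      · exact exists_dom _ i hi 1 (by rw [hb]; decide) (adj_vert _ (Or.inr rfl))
      · exact exists_dom _ i hi 2 (by rw [hb]; decide) (adj_vert _ (Or.inr rfl))
    · -- i ≡ 4 [5] : prev col 6, next col 9
      have hprev : pmask (i - 1) = 6 := by
        rw [pmask_eval _ (by omega), show (i - 1 + 2) % 5 = 0 by omega]; rfl
      have hnext1 : i + 1 < n := by omega
      have hnext : pmask (i + 1) = 9 := by
        rw [pmask_eval _ (by omega), show (i + 1 + 2) % 5 = 2 by omega]; rfl
      rcases fin4_cases j with rfl | rfl | rfl | rfl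
      · exact exists_dom _ (i + 1) hnext1 0 (by rw [hnext]; decide)
          (adj_horiz _ _ (Or.inl rfl) 0)
      · exact exists_dom _ (i - 1) (by omega) 1 (by rw [hprev]; decide)
          (adj_horiz _ _ (Or.inr (by omega)) 1)
      · exact exists_dom _ (i - 1) (by omega) 2 (by rw [hprev]; decide)
          (adj_horiz _ _ (Or.inr (by omega)) 2)
      · exact exists_dom _ (i + 1) hnext1 3 (by rw [hnext]; decide)
          (adj_horiz _ _ (Or.inl rfl) 3)
    · -- i ≡ 0 [5] : col 9, next col 9
      have hb : pmask i = 9 := by rw [pmask_eval i h3, hr]; rfl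
      have hnext1 : i + 1 < n := by omega
      have hnext : pmask (i + 1) = 9 := by
        rw [pmask_eval _ (by omega), show (i + 1 + 2) % 5 = 3 by omega]; rfl
      rcases fin4_cases j with rfl | rfl | rfl | rfl
      · exact exists_dom _ (i + 1) hnext1 0 (by rw [hnext]; decide)
          (adj_horiz _ _ (Or.inl rfl) 0)
      · exact exists_dom _ i hi 0 (by rw [hb]; decide) (adj_vert _ (Or.inr rfl))
      · exact exists_dom _ i hi 3 (by rw [hb]; decide) (adj_vert _ (Or.inl rfl))
      · exact exists_dom _ (i + 1) hnext1 3 (by rw [hnext]; decide)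
          (adj_horiz _ _ (Or.inl rfl) 3)
    · -- i ≡ 1 [5] : col 9, prev col 9
      have hb : pmask i = 9 := by rw [pmask_eval i h3, hr]; rfl
      have hprev3 : 3 ≤ i - 1 := by omega
      have hprev : pmask (i - 1) = 9 := by
        rw [pmask_eval _ hprev3, show (i - 1 + 2) % 5 = 2 by omega]; rfl
      rcases fin4_cases j with rfl | rfl | rfl | rfl
      · exact exists_dom _ (i - 1) (by omega) 0 (by rw [hprev]; decide)
          (adj_horiz _ _ (Or.inr (by omega)) 0)
      · exact exists_dom _ i hi 0 (by rw [hb]; decide) (adj_vert _ (Or.inr rfl))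
      · exact exists_dom _ i hi 3 (by rw [hb]; decide) (adj_vert _ (Or.inl rfl))
      · exact exists_dom _ (i - 1) (by omega) 3 (by rw [hprev]; decide)
          (adj_horiz _ _ (Or.inr (by omega)) 3)
    · -- i ≡ 2 [5] : prev col 9, next col 6
      have hprev : pmask (i - 1) = 9 := by
        rw [pmask_eval _ (by omega), show (i - 1 + 2) % 5 = 3 by omega]; rfl
      have hnext1 : i + 1 < n := by omega
      have hnext : pmask (i + 1) = 6 := by
        rw [pmask_eval _ (by omega), show (i + 1 + 2) % 5 = 0 by omega]; rfl
      rcases fin4_cases j with rfl | rfl | rfl | rfl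
      · exact exists_dom _ (i - 1) (by omega) 0 (by rw [hprev]; decide)
          (adj_horiz _ _ (Or.inr (by omega)) 0)
      · exact exists_dom _ (i + 1) hnext1 1 (by rw [hnext]; decide)
          (adj_horiz _ _ (Or.inl rfl) 1)
      · exact exists_dom _ (i + 1) hnext1 2 (by rw [hnext]; decide)
          (adj_horiz _ _ (Or.inl rfl) 2)
      · exact exists_dom _ (i - 1) (by omega) 3 (by rw [hprev]; decide)
          (adj_horiz _ _ (Or.inr (by omega)) 3)

lemma colS_upD (n i : ℕ) (h : i < n) : colS n (upD n) i = pmask i := by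
  rw [colS, dif_pos h]
  have he : (fun j => decide ((⟨i, h⟩, j) ∈ upD n)) = fun j => bit (pmask i) j := by
    funext j
    simp [upD, Finset.mem_filter]
  rw [he, enc_bit]

lemma mcard_pmask_0 (k : ℕ) : mcard (pmask (5 * k + 2)) = 0 := by
  cases k with
  | zero => decide
  | succ m =>
    rw [pmask_eval _ (by omega), show (5 * (m + 1) + 2 + 2) % 5 = 4 by omega]
    decide

lemma sum_pmask : ∀ k : ℕ, ∑ i ∈ Finset.range (5 * k + 2), mcard (pmask i) = 6 * k + 4 := by
  intro k
  induction k with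
  | zero => decide
  | succ m ih =>
    have h7 : 5 * (m + 1) + 2 = (5 * m + 2) + 1 + 1 + 1 + 1 + 1 := by omega
    rw [h7, Finset.sum_range_succ, Finset.sum_range_succ, Finset.sum_range_succ,
        Finset.sum_range_succ, Finset.sum_range_succ, ih]
    have e1 := mcard_pmask_0 m
    have e2 : mcard (pmask (5 * m + 2 + 1)) = 2 := by
      rw [pmask_eval _ (by omega), show (5 * m + 2 + 1 + 2) % 5 = 0 by omega]; decide
    have e3 : mcard (pmask (5 * m + 2 + 1 + 1)) = 0 := by
      rw [pmask_eval _ (by omega), show (5 * m + 2 + 1 + 1 + 2) % 5 = 1 by omega]; decide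
    have e4 : mcard (pmask (5 * m + 2 + 1 + 1 + 1)) = 2 := by
      rw [pmask_eval _ (by omega), show (5 * m + 2 + 1 + 1 + 1 + 2) % 5 = 2 by omega]; decide
    have e5 : mcard (pmask (5 * m + 2 + 1 + 1 + 1 + 1)) = 2 := by
      rw [pmask_eval _ (by omega), show (5 * m + 2 + 1 + 1 + 1 + 1 + 2) % 5 = 3 by omega]; decide
    rw [e1, e2, e3, e4, e5]
    omega

lemma upD_card (k : ℕ) : (upD (5 * k + 2)).card = 6 * k + 4 := by
  calc (upD (5 * k + 2)).card = costF (5 * k + 2) (upD (5 * k + 2)) (5 * k + 2) :=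
        card_eq_costF _ _
  _ = ∑ i ∈ Finset.range (5 * k + 2), mcard (pmask i) :=
        Finset.sum_congr rfl (fun i hi => by rw [colS_upD _ _ (Finset.mem_range.mp hi)])
  _ = 6 * k + 4 := sum_pmask k

lemma adj_vert2 {n : ℕ} (a : Fin n) {j j' : Fin 4}
    (hjj : j.val + 1 = j'.val ∨ j'.val + 1 = j.val) :
    (gridGraph n 4).Adj (a, j) (a, j') := by
  rw [gridGraph, SimpleGraph.boxProd_adj]
  exact Or.inr ⟨SimpleGraph.pathGraph_adj.mpr hjj, rfl⟩

lemma univ_tds (n : ℕ) (hn : 2 ≤ n) :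
    IsTotalDomSet ((gridGraph n 4).deleteEdges (delE n hn)) ↑(Finset.univ : Finset (Fin n × Fin 4)) := by
  rintro ⟨a, j⟩
  have hpart : ∃ j' : Fin 4, (j.val + 1 = j'.val ∨ j'.val + 1 = j.val) ∧
      ¬({j.val, j'.val} : Finset ℕ) = {1, 2} := by
    rcases fin4_cases j with rfl | rfl | rfl | rfl
    · exact ⟨1, Or.inl rfl, by decide⟩
    · exact ⟨0, Or.inr rfl, by decide⟩
    · exact ⟨3, Or.inl rfl, by decide⟩
    · exact ⟨2, Or.inr rfl, by decide⟩
  obtain ⟨j', hadj, hne⟩ := hpart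
  refine ⟨(a, j'), Finset.mem_coe.mpr (Finset.mem_univ _), ?_⟩
  rw [SimpleGraph.deleteEdges_adj]
  refine ⟨adj_vert2 a hadj, ?_⟩
  intro hmem
  simp only [delE, Set.mem_insert_iff, Set.mem_singleton_iff] at hmem
  have hval : ∀ (x : Fin n) (y : Fin 4) (b : ℕ) (hb : b < n) (r : Fin 4) (rv : ℕ),
      r.val = rv → (x, y) = (⟨b, hb⟩, r) → x.val = b ∧ y.val = rv := by
    intro x y b hb r rv hr hpq
    rw [Prod.mk.injEq] at hpq
    exact ⟨congrArg Fin.val hpq.1, by rw [hpq.2, hr]⟩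
  rcases hmem with h | h | h <;> rw [Sym2.eq_iff] at h
  · rcases h with ⟨h1, h2⟩ | ⟨h1, h2⟩
    · obtain ⟨ha1, hj1⟩ := hval _ _ _ _ _ 0 rfl h1
      obtain ⟨ha2, hj2⟩ := hval _ _ _ _ _ 0 rfl h2
      omega
    · obtain ⟨ha1, hj1⟩ := hval _ _ _ _ _ 0 rfl h1
      obtain ⟨ha2, hj2⟩ := hval _ _ _ _ _ 0 rfl h2
      omega
  · rcases h with ⟨h1, h2⟩ | ⟨h1, h2⟩
    · obtain ⟨ha1, hj1⟩ := hval _ _ _ _ _ 1 rfl h1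
      obtain ⟨ha2, hj2⟩ := hval _ _ _ _ _ 1 rfl h2
      omega
    · obtain ⟨ha1, hj1⟩ := hval _ _ _ _ _ 1 rfl h1
      obtain ⟨ha2, hj2⟩ := hval _ _ _ _ _ 1 rfl h2
      omega
  · rcases h with ⟨h1, h2⟩ | ⟨h1, h2⟩
    · obtain ⟨ha1, hj1⟩ := hval _ _ _ _ _ 1 rfl h1
      obtain ⟨ha2, hj2⟩ := hval _ _ _ _ _ 2 rfl h2
      apply hne
      rw [hj1, hj2]
    · obtain ⟨ha1, hj1⟩ := hval _ _ _ _ _ 2 rfl h1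
      obtain ⟨ha2, hj2⟩ := hval _ _ _ _ _ 1 rfl h2
      apply hne
      rw [hj1, hj2]
      decide

theorem total_bondage_grid_four_two_mod_five (n : ℕ) (hn : 2 ≤ n) (h : n % 5 = 2) :
    totalDomNum ((gridGraph n 4).deleteEdges
        {s(((⟨n - 2, by omega⟩ : Fin n), (0 : Fin 4)), ((⟨n - 1, by omega⟩ : Fin n), (0 : Fin 4))),
         s(((⟨n - 2, by omega⟩ : Fin n), (1 : Fin 4)), ((⟨n - 1, by omega⟩ : Fin n), (1 : Fin 4))),
         s(((⟨n - 1, by omega⟩ : Fin n), (1 : Fin 4)), ((⟨n - 1, by omega⟩ : Fin n), (2 : Fin 4)))})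
      > totalDomNum (gridGraph n 4) ∧
    totalBondage (gridGraph n 4) ≤ 3 := by
  have hn1 : n - 1 < n := by omega
  have hn2 : n - 2 < n := by omega
  obtain ⟨k, hk⟩ : ∃ k, n = 5 * k + 2 := ⟨(n - 2) / 5, by omega⟩
  have hupper : totalDomNum (gridGraph n 4) ≤ 6 * k + 4 := by
    apply Nat.sInf_le
    refine ⟨upD n, upD_tds n hn h, ?_⟩
    rw [hk]
    exact upD_card k
  have hlower : 6 * k + 5 ≤ totalDomNum ((gridGraph n 4).deleteEdges (delE n hn)) := by
    have hne : {m | ∃ D : Finset (Fin n × Fin 4),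
        IsTotalDomSet ((gridGraph n 4).deleteEdges (delE n hn)) ↑D ∧ D.card = m}.Nonempty :=
      ⟨_, Finset.univ, univ_tds n hn, rfl⟩
    obtain ⟨D, hD, hDc⟩ := Nat.sInf_mem hne
    have hlb := lower_bound_s16 hn D hD h
    have : totalDomNum ((gridGraph n 4).deleteEdges (delE n hn)) = D.card := hDc.symm
    omega
  have hgt : totalDomNum ((gridGraph n 4).deleteEdges (delE n hn))
      > totalDomNum (gridGraph n 4) := by omega
  refine ⟨hgt, ?_⟩
  apply Nat.sInf_le
  refine ⟨({s(((⟨n - 2, hn2⟩ : Fin n), (0 : Fin 4)), ((⟨n - 1, hn1⟩ : Fin n), (0 : Fin 4))),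
           s(((⟨n - 2, hn2⟩ : Fin n), (1 : Fin 4)), ((⟨n - 1, hn1⟩ : Fin n), (1 : Fin 4))),
           s(((⟨n - 1, hn1⟩ : Fin n), (1 : Fin 4)), ((⟨n - 1, hn1⟩ : Fin n), (2 : Fin 4)))} :
           Finset (Sym2 (Fin n × Fin 4))), ?_, ?_, ?_⟩
  · -- subset of edge set
    intro e he
    simp only [Finset.coe_insert, Set.mem_insert_iff, Finset.coe_singleton,
      Set.mem_singleton_iff] at he
    rcases he with rfl | rfl | rfl
    · exact (gridGraph n 4).mem_edgeSet.mpr (adj_horiz hn2 hn1 (Or.inl (by omega)) 0)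
    · exact (gridGraph n 4).mem_edgeSet.mpr (adj_horiz hn2 hn1 (Or.inl (by omega)) 1)
    · exact (gridGraph n 4).mem_edgeSet.mpr (adj_vert hn1 (Or.inl rfl))
  · -- cardinality 3
    have hrow : ∀ (x z : Fin n) (y w : Fin 4), (x, y) = (z, w) → y.val = w.val :=
      fun x z y w hh => by rw [Prod.mk.injEq] at hh; rw [hh.2]
    have hcol : ∀ (x z : Fin n) (y w : Fin 4), (x, y) = (z, w) → x.val = z.val :=
      fun x z y w hh => by rw [Prod.mk.injEq] at hh; rw [hh.1]
    have d12 : s(((⟨n - 2, hn2⟩ : Fin n), (0 : Fin 4)), ((⟨n - 1, hn1⟩ : Fin n), (0 : Fin 4))) ≠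
        s(((⟨n - 2, hn2⟩ : Fin n), (1 : Fin 4)), ((⟨n - 1, hn1⟩ : Fin n), (1 : Fin 4))) := by
      intro heq
      rw [Sym2.eq_iff] at heq
      rcases heq with ⟨h1, _⟩ | ⟨h1, _⟩ <;> exact absurd (hrow _ _ _ _ h1) (by decide)
    have d13 : s(((⟨n - 2, hn2⟩ : Fin n), (0 : Fin 4)), ((⟨n - 1, hn1⟩ : Fin n), (0 : Fin 4))) ≠
        s(((⟨n - 1, hn1⟩ : Fin n), (1 : Fin 4)), ((⟨n - 1, hn1⟩ : Fin n), (2 : Fin 4))) := by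
      intro heq
      rw [Sym2.eq_iff] at heq
      rcases heq with ⟨h1, _⟩ | ⟨h1, _⟩ <;> exact absurd (hrow _ _ _ _ h1) (by decide)
    have d23 : s(((⟨n - 2, hn2⟩ : Fin n), (1 : Fin 4)), ((⟨n - 1, hn1⟩ : Fin n), (1 : Fin 4))) ≠
        s(((⟨n - 1, hn1⟩ : Fin n), (1 : Fin 4)), ((⟨n - 1, hn1⟩ : Fin n), (2 : Fin 4))) := by
      intro heq
      rw [Sym2.eq_iff] at heq
      rcases heq with ⟨h1, _⟩ | ⟨h1, _⟩
      · exact absurd (hcol _ _ _ _ h1) (show ¬(n - 2 = n - 1) by omega)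
      · exact absurd (hrow _ _ _ _ h1) (by decide)
    rw [Finset.card_insert_of_notMem (by simp [d12, d13]),
        Finset.card_insert_of_notMem (by simp [d23]), Finset.card_singleton]
  · -- deleting increases the total domination number
    have hcoe : (↑({s(((⟨n - 2, hn2⟩ : Fin n), (0 : Fin 4)), ((⟨n - 1, hn1⟩ : Fin n), (0 : Fin 4))),
           s(((⟨n - 2, hn2⟩ : Fin n), (1 : Fin 4)), ((⟨n - 1, hn1⟩ : Fin n), (1 : Fin 4))),
           s(((⟨n - 1, hn1⟩ : Fin n), (1 : Fin 4)), ((⟨n - 1, hn1⟩ : Fin n), (2 : Fin 4)))} :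
           Finset (Sym2 (Fin n × Fin 4))) : Set (Sym2 (Fin n × Fin 4))) = delE n hn := by
      simp only [Finset.coe_insert, Finset.coe_singleton, delE]
    rw [hcoe]
    exact hgt
end
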